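/- Let W_Γ be a Coxeter group and let Δ be a maximal clique of Γ. Then the normalizer of the special subgroup W_Δ in W_Γ equals W_Δ itself; in particular, the centralizer of W_Δ in W_Γ equals the center Z(W_Δ) of W_Δ. -/

import Mathlib

open Function Subgroup

namespace CoxeterMatrix

variable {V : Type*}

/-- Two vertices of a Coxeter graph are adjacent iff they are distinct and their Coxeter
matrix entry is nonzero (an entry `0` encodes `∞`, i.e. non-adjacency; entries `≥ 2`
are the edge labels). -/
def Adj (M : CoxeterMatrix V) (v w : V) : Prop := v ≠ w ∧ M v w ≠ 0

/-- A clique of the Coxeter graph: a set of pairwise adjacent vertices. -/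
def IsClique (M : CoxeterMatrix V) (S : Set V) : Prop := S.Pairwise M.Adj

/-- A maximal clique: a clique not properly contained in any other clique. -/
def IsMaxClique (M : CoxeterMatrix V) (S : Set V) : Prop :=
  M.IsClique S ∧ ∀ T, M.IsClique T → S ⊆ T → S = T

/-- The special subgroup `W_S` of the Coxeter group generated by the
simple reflections indexed by `S`. -/
def sp (M : CoxeterMatrix V) (S : Set V) : Subgroup M.Group :=
  Subgroup.closure (M.simple '' S)

/-- A vertex is even if every edge containing it has even label. -/
def EvenVertex (M : CoxeterMatrix V) (v : V) : Prop :=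
  ∀ w, M.Adj v w → Even (M v w)

end CoxeterMatrix

/-- `G` virtually surjects onto `Q` iff some finite-index subgroup of `G`
admits a surjective group homomorphism onto `Q`. -/
def VirtuallySurjectsOnto (G Q : Type*) [Group G] [Group Q] : Prop :=
  ∃ H : Subgroup G, H.FiniteIndex ∧ ∃ φ : H →* Q, Function.Surjective φ

/-- The free product `ℤ/2 * ℤ/2` (the infinite dihedral group). -/
abbrev Z2Z2 := Monoid.Coprod (Multiplicative (ZMod 2)) (Multiplicative (ZMod 2))

namespace Stmt8Aux

attribute [local instance] Classical.propDecidable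

open CoxeterSystem List


open CoxeterSystem List

variable {V : Type*} {W : Type*} [Group W] {M : CoxeterMatrix V} (cs : CoxeterSystem M W)

/-- special subgroup for a Coxeter system -/
def spS (S : Set V) : Subgroup W := Subgroup.closure (cs.simple '' S)

theorem simple_mem_spS {S : Set V} {i : V} (hi : i ∈ S) : cs.simple i ∈ spS cs S :=
  Subgroup.subset_closure ⟨i, hi, rfl⟩

theorem wordProd_mem_spS {S : Set V} {ω : List V} (hω : ∀ i ∈ ω, i ∈ S) :
    cs.wordProd ω ∈ spS cs S := by
  induction ω with
  | nil => rw [cs.wordProd_nil]; exact (spS cs S).one_mem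
  | cons i ω ih =>
      rw [cs.wordProd_cons]
      exact (spS cs S).mul_mem (simple_mem_spS cs (hω i (by simp)))
        (ih fun j hj => hω j (by simp [hj]))

theorem mem_spS_iff {S : Set V} {w : W} :
    w ∈ spS cs S ↔ ∃ ω : List V, (∀ i ∈ ω, i ∈ S) ∧ cs.wordProd ω = w := by
  constructor
  · intro hw
    induction hw using Subgroup.closure_induction with
    | mem x hx =>
        obtain ⟨i, hi, rfl⟩ := hx
        exact ⟨[i], by simpa using hi, by simp⟩
    | one => exact ⟨[], by simp, by simp⟩
    | mul x y _ _ hx hy =>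
        obtain ⟨ω₁, h₁, rfl⟩ := hx
        obtain ⟨ω₂, h₂, rfl⟩ := hy
        refine ⟨ω₁ ++ ω₂, ?_, by rw [cs.wordProd_append]⟩
        intro i hi
        rcases List.mem_append.mp hi with h | h
        exacts [h₁ i h, h₂ i h]
    | inv x _ hx =>
        obtain ⟨ω, h₁, rfl⟩ := hx
        exact ⟨ω.reverse, fun i hi => h₁ i (List.mem_reverse.mp hi), by simp⟩
  · rintro ⟨ω, hω, rfl⟩
    exact wordProd_mem_spS cs hω


attribute [local instance] Classical.propDecidable

open CoxeterSystem List

section Abstract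

variable {W : Type*} [Group W]

theorem inv_invol {a : W} (ha : a * a = 1) : a⁻¹ = a := by
  rw [← mul_one a⁻¹, ← ha, ← mul_assoc, inv_mul_cancel, one_mul]

theorem conj_eq_iff (g x y : W) : g⁻¹ * x * g = y ↔ x = g * y * g⁻¹ := by
  constructor
  · rintro rfl; group
  · rintro rfl; group

theorem cond_one {a b : W} (hb : b * b = 1) (w : W) :
    (b * w * b = a) ↔ w = (b * a) ^ 1 * b := by
  have hbi : b⁻¹ = b := inv_invol hb
  rw [pow_one, show b * w * b = b⁻¹ * w * b from by rw [hbi], conj_eq_iff, hbi, mul_assoc]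

theorem cond_shift {a b : W} (ha : a * a = 1) (hb : b * b = 1) (w : W) (n : ℕ) :
    ((a * b) * w * (b * a) = (b * a) ^ n * b) ↔ w = (b * a) ^ (n + 2) * b := by
  have hρ : a * b = (b * a)⁻¹ := by rw [mul_inv_rev, inv_invol ha, inv_invol hb]
  have key : (b * a) ^ (n + 2) * b = (b * a) * ((b * a) ^ n * b) * (b * a)⁻¹ := by
    have hbρ : b * (b * a)⁻¹ = (b * a) * b := by
      rw [← hρ]; group
    calc (b * a) ^ (n + 2) * b
        = (b * a) * ((b * a) ^ n * ((b * a) * b)) := by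
          rw [show n + 2 = 1 + (n + 1) from by ring, pow_add, pow_one, pow_succ]
          simp only [mul_assoc]
      _ = (b * a) * ((b * a) ^ n * (b * (b * a)⁻¹)) := by rw [hbρ]
      _ = (b * a) * ((b * a) ^ n * b) * (b * a)⁻¹ := by simp only [mul_assoc]
  rw [hρ, conj_eq_iff, ← key]

end Abstract

variable {V : Type*} {W : Type*} [Group W] {M : CoxeterMatrix V} (cs : CoxeterSystem M W)

/-- one-generator step of the reflection-sign representation -/
noncomputable def etaStep (i : V) : Function.End (W × ZMod 2) :=
  fun p => (cs.simple i * p.1 * cs.simple i, p.2 + (if p.1 = cs.simple i then 1 else 0))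

theorem endMul_apply (f g : Function.End (W × ZMod 2)) (p : W × ZMod 2) : (f * g) p = f (g p) :=
  rfl

theorem etaStep_iter (i j : V) (k : ℕ) (w : W) (z : ZMod 2) :
    ((etaStep cs i * etaStep cs j) ^ k) (w, z) =
      ((cs.simple i * cs.simple j) ^ k * w * (cs.simple j * cs.simple i) ^ k,
        z + ∑ n ∈ Finset.range (2 * k),
          (if w = (cs.simple j * cs.simple i) ^ n * cs.simple j then 1 else 0)) := by
  have ha : cs.simple i * cs.simple i = 1 := cs.simple_mul_simple_self i
  have hb : cs.simple j * cs.simple j = 1 := cs.simple_mul_simple_self j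
  set A := cs.simple i
  set B := cs.simple j
  induction k generalizing w z with
  | zero => simp; rfl
  | succ k ih =>
      have hpow : ((etaStep cs i * etaStep cs j) ^ (k+1)) (w, z)
          = ((etaStep cs i * etaStep cs j) ^ k) ((etaStep cs i * etaStep cs j) (w, z)) := by
        rw [pow_succ, endMul_apply]
      have hstep : (etaStep cs i * etaStep cs j) (w, z) =
          ((A * B) * w * (B * A),
            z + ((if w = (B * A) ^ 0 * B then 1 else 0)
              + if w = (B * A) ^ 1 * B then 1 else 0)) := by
        rw [endMul_apply]
        simp only [etaStep]
        refine Prod.ext ?_ ?_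
        · simp [mul_assoc]; rfl
        · simp only [pow_zero, one_mul, add_assoc]
          congr 2
          exact if_congr (cond_one hb w) rfl rfl
      rw [hpow, hstep, ih]
      refine Prod.ext ?_ ?_
      · show (A * B) ^ k * (A * B * w * (B * A)) * (B * A) ^ k
            = (A * B) ^ (k+1) * w * (B * A) ^ (k+1)
        rw [pow_succ (A*B) k, pow_succ' (B*A) k]
        simp only [mul_assoc]
      · show z + ((if w = (B * A) ^ 0 * B then 1 else 0) + if w = (B * A) ^ 1 * B then 1 else 0)
            + (∑ n ∈ Finset.range (2 * k),
              if (A * B) * w * (B * A) = (B * A) ^ n * B then 1 else 0)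
          = z + ∑ n ∈ Finset.range (2 * (k+1)),
              (if w = (B * A) ^ n * B then 1 else 0)
        have hre : ∀ n : ℕ, (if (A * B) * w * (B * A) = (B * A) ^ n * B then (1:ZMod 2) else 0)
            = if w = (B * A) ^ (n + 2) * B then 1 else 0 := by
          intro n
          simp only [cond_shift ha hb w n]
        have hsum : (∑ n ∈ Finset.range (2 * (k+1)), (if w = (B * A) ^ n * B then (1:ZMod 2) else 0))
            = ((∑ n ∈ Finset.range (2 * k), (if w = (B * A) ^ (n+1+1) * B then (1:ZMod 2) else 0))
              + (if w = (B * A) ^ (0+1) * B then 1 else 0))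
              + (if w = (B * A) ^ 0 * B then 1 else 0) := by
          rw [show 2 * (k + 1) = (2*k+1) + 1 from by ring, Finset.sum_range_succ',
            Finset.sum_range_succ']
        rw [hsum]
        simp only [hre, show ∀ n:ℕ, n + 1 + 1 = n + 2 from fun n => rfl, zero_add]
        abel


theorem etaStep_liftable : M.IsLiftable (etaStep cs) := by
  intro i j
  funext p
  obtain ⟨w, z⟩ := p
  rw [etaStep_iter cs i j (M i j) w z, cs.simple_mul_simple_pow i j, cs.simple_mul_simple_pow' i j]
  have hsplit : ∑ n ∈ Finset.range (2 * M i j),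
      (if w = (cs.simple j * cs.simple i) ^ n * cs.simple j then (1:ZMod 2) else 0)
      = (∑ n ∈ Finset.range (M i j),
          (if w = (cs.simple j * cs.simple i) ^ n * cs.simple j then (1:ZMod 2) else 0))
        + ∑ n ∈ Finset.range (M i j),
          (if w = (cs.simple j * cs.simple i) ^ (M i j + n) * cs.simple j then (1:ZMod 2) else 0) := by
    rw [two_mul, Finset.sum_range_add]
  have heq : ∀ n : ℕ, (cs.simple j * cs.simple i) ^ (M i j + n) = (cs.simple j * cs.simple i) ^ n := by
    intro n
    rw [pow_add, cs.simple_mul_simple_pow' i j, one_mul]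
  simp only [heq] at hsplit
  have hxx : ∀ x : ZMod 2, x + x = 0 := by decide
  rw [hsplit, hxx]
  show ((1:W) * w * 1, z + 0) = (w, z)
  rw [one_mul, mul_one, add_zero]

/-- The sign-cocycle representation. -/
noncomputable def etaF : W →* Function.End (W × ZMod 2) :=
  cs.lift ⟨etaStep cs, etaStep_liftable cs⟩

theorem etaF_simple (i : V) : etaF cs (cs.simple i) = etaStep cs i := by
  unfold etaF
  exact cs.lift_apply_simple _ i

/-- The sign cocycle. `eta cs w t = 1` iff `t` is a "right inversion" of `w`. -/
noncomputable def eta (w t : W) : ZMod 2 := ((etaF cs) w (t, 0)).2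

theorem eta_one (t : W) : eta cs 1 t = 0 := by
  rw [eta, map_one]
  rfl

theorem etaF_apply (w : W) : ∀ (t : W) (z : ZMod 2),
    etaF cs w (t, z) = (w * t * w⁻¹, z + eta cs w t) := by
  induction w using cs.simple_induction_left with
  | one =>
      intro t z
      have h1 : etaF cs 1 = 1 := map_one _
      rw [h1, eta_one cs t]
      show (t, z) = (1 * t * 1⁻¹, z + 0)
      rw [one_mul, inv_one, mul_one, add_zero]
  | mul_simple_left w i ih =>
      have hcomp : ∀ (t : W) (z : ZMod 2), etaF cs (cs.simple i * w) (t, z)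
          = ((cs.simple i * w) * t * (cs.simple i * w)⁻¹,
              z + (eta cs w t + if w * t * w⁻¹ = cs.simple i then 1 else 0)) := by
        intro t z
        have hmaps : etaF cs (cs.simple i * w) = etaStep cs i * etaF cs w := by
          rw [map_mul, etaF_simple]
        rw [hmaps, endMul_apply, ih t z]
        show etaStep cs i (w * t * w⁻¹, z + eta cs w t) = _
        simp only [etaStep]
        refine Prod.ext ?_ ?_
        · show cs.simple i * (w * t * w⁻¹) * cs.simple i = _
          rw [mul_inv_rev, cs.inv_simple]
          simp only [mul_assoc]
        · show z + eta cs w t + _ = _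
          rw [add_assoc]
      intro t z
      have heta : eta cs (cs.simple i * w) t
          = eta cs w t + (if w * t * w⁻¹ = cs.simple i then 1 else 0) := by
        rw [eta, hcomp t 0, zero_add]
      rw [hcomp t z, heta]

theorem eta_cocycle (w' w t : W) :
    eta cs (w' * w) t = eta cs w t + eta cs w' (w * t * w⁻¹) := by
  have h : etaF cs (w' * w) (t, 0) = etaF cs w' (etaF cs w (t, 0)) := by
    rw [map_mul]; rfl
  rw [eta, h, etaF_apply cs w t 0, etaF_apply cs w' (w * t * w⁻¹) (0 + eta cs w t)]
  show 0 + eta cs w t + eta cs w' (w * t * w⁻¹) = _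
  rw [zero_add]

theorem eta_simple (i : V) (t : W) :
    eta cs (cs.simple i) t = if t = cs.simple i then 1 else 0 := by
  rw [eta, etaF_simple]
  show (0 + if t = cs.simple i then (1:ZMod 2) else 0) = _
  rw [zero_add]

theorem eta_count (ω : List V) (t : W) :
    eta cs (cs.wordProd ω) t = ((cs.rightInvSeq ω).count t : ZMod 2) := by
  induction ω with
  | nil =>
      rw [cs.wordProd_nil, eta_one, cs.rightInvSeq_nil]
      simp
  | cons i ω ih =>
      rw [cs.wordProd_cons, eta_cocycle cs (cs.simple i) (cs.wordProd ω) t, ih, eta_simple]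
      show _ = ((List.count t (((cs.wordProd ω)⁻¹ * cs.simple i * cs.wordProd ω) :: cs.rightInvSeq ω)) : ZMod 2)
      rw [List.count_cons]
      have hcond : (cs.wordProd ω * t * (cs.wordProd ω)⁻¹ = cs.simple i)
          ↔ ((cs.wordProd ω)⁻¹ * cs.simple i * cs.wordProd ω = t) := by
        constructor
        · intro h; rw [← h]; group
        · intro h; rw [← h]; group
      push_cast
      simp only [beq_iff_eq]
      by_cases h : (cs.wordProd ω)⁻¹ * cs.simple i * cs.wordProd ω = t
      · rw [if_pos h, if_pos (hcond.mpr h)]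
      · rw [if_neg h, if_neg (fun hc => h (hcond.mp hc))]

theorem eta_refl_self {t : W} (ht : cs.IsReflection t) : eta cs t t = 1 := by
  obtain ⟨u, i, rfl⟩ := ht
  have h2 : u⁻¹ * (u * cs.simple i * u⁻¹) * (u⁻¹)⁻¹ = cs.simple i := by group
  have h1 : eta cs (u * cs.simple i * u⁻¹) (u * cs.simple i * u⁻¹)
      = eta cs u⁻¹ (u * cs.simple i * u⁻¹) + eta cs (u * cs.simple i) (cs.simple i) := by
    rw [eta_cocycle cs (u * cs.simple i) u⁻¹ (u * cs.simple i * u⁻¹), h2]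
  have h3 : eta cs (u * cs.simple i) (cs.simple i)
      = 1 + eta cs u (cs.simple i) := by
    have hsss : cs.simple i * cs.simple i * (cs.simple i)⁻¹ = cs.simple i := by
      rw [cs.inv_simple, cs.simple_mul_simple_cancel_right]
    rw [eta_cocycle cs u (cs.simple i) (cs.simple i), hsss, eta_simple, if_pos rfl, add_comm]
  have h4 : eta cs u⁻¹ (u * cs.simple i * u⁻¹) = eta cs u (cs.simple i) := by
    have h5 : eta cs (u * u⁻¹) (u * cs.simple i * u⁻¹) = 0 := by
      rw [mul_inv_cancel, eta_one]
    rw [eta_cocycle cs u u⁻¹ (u * cs.simple i * u⁻¹), h2] at h5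
    have : ∀ x y : ZMod 2, x + y = 0 → x = y := by decide
    exact this _ _ h5
  rw [h1, h3, h4]
  have : ∀ a : ZMod 2, a + (1 + a) = 1 := by decide
  exact this _

theorem exists_erase_of_eta_one {w t : W} (h : eta cs w t = 1) {ω : List V}
    (hω : cs.wordProd ω = w) : ∃ j < ω.length, w * t = cs.wordProd (ω.eraseIdx j) := by
  have hcount : ((cs.rightInvSeq ω).count t : ZMod 2) = 1 := by
    rw [← eta_count, hω, h]
  have hmem : t ∈ cs.rightInvSeq ω := by
    by_contra hmem
    rw [List.count_eq_zero_of_not_mem hmem] at hcount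
    exact absurd hcount (by decide)
  obtain ⟨j, hj, hget⟩ := List.mem_iff_getElem.mp hmem
  refine ⟨j, by rw [← cs.length_rightInvSeq ω]; exact hj, ?_⟩
  have hgetD : (cs.rightInvSeq ω).getD j 1 = t := by
    rw [List.getD_eq_getElem _ _ hj, hget]
  rw [← hω, ← hgetD, cs.wordProd_mul_getD_rightInvSeq]

theorem length_mul_lt_of_eta_one {w t : W} (h : eta cs w t = 1) :
    cs.length (w * t) < cs.length w := by
  obtain ⟨ω, hlen, hw⟩ := cs.exists_reduced_word w
  obtain ⟨j, hj, herase⟩ := exists_erase_of_eta_one cs h hw.symm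
  calc cs.length (w * t) = cs.length (cs.wordProd (ω.eraseIdx j)) := by rw [herase]
    _ ≤ (ω.eraseIdx j).length := cs.length_wordProd_le _
    _ < ω.length := by rw [← List.length_eraseIdx_add_one hj]; omega
    _ = cs.length w := by rw [hw]; exact (Eq.symm hlen)

/-- Strong exchange, packaged as an iff. -/
theorem eta_eq_one_iff {w t : W} (ht : cs.IsReflection t) :
    eta cs w t = 1 ↔ cs.length (w * t) < cs.length w := by
  constructor
  · exact length_mul_lt_of_eta_one cs
  · intro hlt
    set y := w * t with hy
    have hyt : y * t = w := by
      rw [hy, mul_assoc, ht.mul_self, mul_one]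
    have h0 : eta cs y t = 0 := by
      rcases (by decide : ∀ x : ZMod 2, x = 0 ∨ x = 1) (eta cs y t) with h | h
      · exact h
      · exfalso
        have := length_mul_lt_of_eta_one cs h
        rw [hyt] at this
        omega
    have hc : eta cs (y * t) t = eta cs t t + eta cs y (t * t * t⁻¹) := eta_cocycle cs y t t
    rw [ht.mul_self, one_mul, ht.inv] at hc
    rw [← hyt, hc, eta_refl_self cs ht, h0, add_zero]

/-- Right exchange property for simple reflections. -/
theorem exchange_simple {ω : List V} (hω : cs.IsReduced ω) {x : V}
    (hlt : cs.length (cs.wordProd ω * cs.simple x) < cs.length (cs.wordProd ω)) :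
    ∃ j < ω.length, cs.wordProd ω * cs.simple x = cs.wordProd (ω.eraseIdx j) := by
  have h1 : eta cs (cs.wordProd ω) (cs.simple x) = 1 :=
    (eta_eq_one_iff cs (cs.isReflection_simple x)).mpr hlt
  exact exists_erase_of_eta_one cs h1 rfl


theorem isReduced_nil : cs.IsReduced ([] : List V) := by
  unfold CoxeterSystem.IsReduced
  simp

theorem delete_two {ω : List V} (hnr : ¬ cs.IsReduced ω) :
    ∃ ω' : List V, (∀ i ∈ ω', i ∈ ω) ∧ ω'.length + 2 = ω.length
      ∧ cs.wordProd ω' = cs.wordProd ω := by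
  have hne : ω ≠ [] := by rintro rfl; exact hnr (isReduced_nil cs)
  have hlen1 : 1 ≤ ω.length := List.length_pos_iff.mpr hne
  have hex : ∃ j, ¬ cs.IsReduced (ω.take (j+1)) :=
    ⟨ω.length - 1, by rw [Nat.sub_add_cancel hlen1, List.take_length]; exact hnr⟩
  set k := Nat.find hex with hkdef
  have hk : ¬ cs.IsReduced (ω.take (k+1)) := Nat.find_spec hex
  have hmin : ∀ j < k, cs.IsReduced (ω.take (j+1)) := fun j hj => not_not.mp (Nat.find_min hex hj)
  have hklt : k < ω.length := by
    by_contra hge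
    push_neg at hge
    have h1 : ω.length - 1 < k := by omega
    exact Nat.find_min hex h1 (by rw [Nat.sub_add_cancel hlen1, List.take_length]; exact hnr)
  have hredk : cs.IsReduced (ω.take k) := by
    rcases Nat.eq_zero_or_pos k with h0 | hpos
    · rw [h0, List.take_zero]; exact isReduced_nil cs
    · have := hmin (k-1) (by omega)
      rwa [Nat.sub_add_cancel hpos] at this
  set x := ω.get ⟨k, hklt⟩ with hxdef
  have htake : ω.take (k+1) = ω.take k ++ [x] := by
    rw [List.take_succ]
    congr
    rw [List.getElem?_eq_getElem hklt]
    rfl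
  have hlentakek : (ω.take k).length = k := by
    rw [List.length_take]; omega
  have hw0 : cs.length (cs.wordProd (ω.take k)) = k := by
    rw [hredk, hlentakek]
  have hprod1 : cs.wordProd (ω.take (k+1)) = cs.wordProd (ω.take k) * cs.simple x := by
    rw [htake, cs.wordProd_append, cs.wordProd_singleton]
  have hlt : cs.length (cs.wordProd (ω.take k) * cs.simple x) < cs.length (cs.wordProd (ω.take k)) := by
    rcases cs.length_mul_simple (cs.wordProd (ω.take k)) x with h | h
    · exfalso
      apply hk
      unfold CoxeterSystem.IsReduced
      rw [hprod1, h, hw0, List.length_take]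
      omega
    · omega
  obtain ⟨j, hj, herase⟩ := exchange_simple cs hredk hlt
  rw [hlentakek] at hj
  refine ⟨(ω.take k).eraseIdx j ++ ω.drop (k+1), ?_, ?_, ?_⟩
  · intro i hi
    rcases List.mem_append.mp hi with h | h
    · exact (List.take_sublist k ω).subset ((List.eraseIdx_sublist _ j).subset h)
    · exact (List.drop_sublist (k+1) ω).subset h
  · rw [List.length_append, List.length_drop]
    have : ((ω.take k).eraseIdx j).length + 1 = (ω.take k).length :=
      List.length_eraseIdx_add_one (by rw [hlentakek]; exact hj)
    omega
  · rw [cs.wordProd_append, ← herase, ← hprod1]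
    conv_rhs => rw [← List.take_append_drop (k+1) ω]
    rw [cs.wordProd_append]

theorem exists_reduced_letters : ∀ (n : ℕ) (ω : List V), ω.length ≤ n →
    ∃ ω' : List V, (∀ i ∈ ω', i ∈ ω) ∧ cs.IsReduced ω' ∧ cs.wordProd ω' = cs.wordProd ω := by
  intro n
  induction n with
  | zero =>
      intro ω hω
      have : ω = [] := List.length_eq_zero_iff.mp (by omega)
      subst this
      exact ⟨[], by simp, isReduced_nil cs, rfl⟩
  | succ n ih =>
      intro ω hω
      by_cases hred : cs.IsReduced ω
      · exact ⟨ω, fun i hi => hi, hred, rfl⟩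
      · obtain ⟨ω₁, hmem, hlen, hprod⟩ := delete_two cs hred
        obtain ⟨ω', hmem', hred', hprod'⟩ := ih ω₁ (by omega)
        exact ⟨ω', fun i hi => hmem i (hmem' i hi), hred', by rw [hprod', hprod]⟩

theorem mem_spS_reduced {S : Set V} {w : W} (hw : w ∈ spS cs S) :
    ∃ ω : List V, (∀ i ∈ ω, i ∈ S) ∧ cs.IsReduced ω ∧ cs.wordProd ω = w := by
  obtain ⟨ω, hmem, rfl⟩ := (mem_spS_iff cs).mp hw
  obtain ⟨ω', hmem', hred', hprod'⟩ := exists_reduced_letters cs ω.length ω le_rfl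
  exact ⟨ω', fun i hi => hmem i (hmem' i hi), hred', hprod'⟩

theorem coset_min_right {S : Set V} {g : W}
    (hmin : ∀ u ∈ spS cs S, cs.length g ≤ cs.length (g * u)) :
    ∀ u ∈ spS cs S, cs.length (g * u) = cs.length g + cs.length u := by
  suffices h : ∀ (n : ℕ), ∀ u ∈ spS cs S, cs.length u ≤ n →
      cs.length (g * u) = cs.length g + cs.length u by
    intro u hu
    exact h (cs.length u) u hu le_rfl
  intro n
  induction n with
  | zero =>
      intro u hu hlen
      have h1 : u = 1 := cs.length_eq_zero_iff.mp (by omega)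
      subst h1
      simp
  | succ n ih =>
      intro u hu hlen
      by_cases h1 : u = 1
      · subst h1; simp
      obtain ⟨β, hβS, hβred, hβprod⟩ := mem_spS_reduced cs hu
      have hβne : β ≠ [] := by
        rintro rfl
        exact h1 (by rw [← hβprod, cs.wordProd_nil])
      set x := β.getLast hβne with hxdef
      have hxS : x ∈ S := hβS x (List.getLast_mem hβne)
      set β' := β.dropLast with hβ'def
      have hsplit : β = β' ++ [x] := (List.dropLast_append_getLast hβne).symm
      have hβ'red : cs.IsReduced β' := by
        have : β' = β.take (β.length - 1) := by rw [hβ'def, List.dropLast_eq_take]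
        rw [this]
        exact hβred.take _
      set u' := cs.wordProd β' with hu'def
      have hu'S : u' ∈ spS cs S :=
        wordProd_mem_spS cs (fun i hi => hβS i (List.dropLast_sublist β |>.subset hi))
      have hulen : cs.length u = β.length := by rw [← hβprod, hβred]
      have hu'len : cs.length u' = β.length - 1 := by
        rw [hu'def, hβ'red, hβ'def, List.length_dropLast]
      have huu' : u = u' * cs.simple x := by
        rw [← hβprod, hsplit, cs.wordProd_append, cs.wordProd_singleton, hu'def]
      have hβlen1 : 1 ≤ β.length := List.length_pos_iff.mpr hβne
      have ihu' : cs.length (g * u') = cs.length g + cs.length u' := by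
        apply ih u' hu'S
        omega
      have hgoal : cs.length (g * u' * cs.simple x) = cs.length (g * u') + 1 := by
        rcases cs.length_mul_simple (g * u') x with h | h
        · exact h
        · exfalso
          -- exchange on the reduced word of g ++ reduced word of u'
          obtain ⟨α, hαred, hgα⟩ := cs.exists_reduced_word g
          have hαlen : α.length = cs.length g := by rw [hgα]; exact (Eq.symm hαred)
          set γ := α ++ β' with hγdef
          have hγprod : cs.wordProd γ = g * u' := by
            rw [hγdef, cs.wordProd_append, ← hgα, hu'def]
          have hγred : cs.IsReduced γ := by
            unfold CoxeterSystem.IsReduced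
            rw [hγprod, ihu', List.length_append, hαlen, hu'len, hβ'def, List.length_dropLast]
          have hlt : cs.length (cs.wordProd γ * cs.simple x) < cs.length (cs.wordProd γ) := by
            rw [hγprod]; omega
          obtain ⟨j, hj, herase⟩ := exchange_simple cs hγred hlt
          rw [hγprod] at herase
          rcases lt_or_ge j α.length with hcase | hcase
          · -- erase inside α: contradiction with hmin
            rw [hγdef, List.eraseIdx_append_of_lt_length hcase, cs.wordProd_append] at herase
            set r := u' * cs.simple x * u'⁻¹ with hrdef
            have hrS : r ∈ spS cs S :=
              (spS cs S).mul_mem ((spS cs S).mul_mem hu'S (simple_mem_spS cs hxS))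
                ((spS cs S).inv_mem hu'S)
            have hgr : cs.wordProd (α.eraseIdx j) = g * r := by
              rw [hrdef]
              have : g * u' * cs.simple x = cs.wordProd (α.eraseIdx j) * u' := herase
              calc cs.wordProd (α.eraseIdx j) = (g * u' * cs.simple x) * u'⁻¹ := by
                    rw [this, mul_assoc, mul_inv_cancel, mul_one]
                _ = g * (u' * cs.simple x * u'⁻¹) := by simp only [mul_assoc]
            have hlow : cs.length (g * r) ≤ α.length - 1 := by
              rw [← hgr]
              calc cs.length (cs.wordProd (α.eraseIdx j)) ≤ (α.eraseIdx j).length :=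
                    cs.length_wordProd_le _
                _ = α.length - 1 := by
                    have := List.length_eraseIdx_add_one hcase
                    omega
            have hm := hmin r hrS
            rw [hαlen] at hlow
            have h1le : 1 ≤ cs.length g := by rw [← hαlen]; omega
            omega
          · -- erase inside β': contradiction with reducedness of β
            rw [hγdef, List.eraseIdx_append_of_length_le hcase, cs.wordProd_append, ← hgα]
              at herase
            rw [mul_assoc] at herase
            have hcancel : u' * cs.simple x = cs.wordProd (β'.eraseIdx (j - α.length)) :=
              mul_left_cancel herase
            have hjb : j - α.length < β'.length := by
              rw [hγdef, List.length_append] at hj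
              omega
            have : cs.length (u' * cs.simple x) ≤ β'.length - 1 := by
              rw [hcancel]
              calc cs.length (cs.wordProd (β'.eraseIdx (j - α.length)))
                  ≤ (β'.eraseIdx (j - α.length)).length := cs.length_wordProd_le _
                _ = β'.length - 1 := by
                    have := List.length_eraseIdx_add_one hjb
                    omega
            rw [← huu', hulen] at this
            rw [hβ'def, List.length_dropLast] at this
            omega
      calc cs.length (g * u) = cs.length (g * u' * cs.simple x) := by rw [huu', mul_assoc]
        _ = cs.length g + cs.length u' + 1 := by rw [hgoal, ihu']
        _ = cs.length g + cs.length u := by rw [hulen, hu'len]; omega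

theorem coset_min_left {S : Set V} {g : W}
    (hmin : ∀ u ∈ spS cs S, cs.length g ≤ cs.length (u * g)) :
    ∀ u ∈ spS cs S, cs.length (u * g) = cs.length u + cs.length g := by
  have hmin' : ∀ u ∈ spS cs S, cs.length g⁻¹ ≤ cs.length (g⁻¹ * u) := by
    intro u hu
    rw [cs.length_inv]
    have h1 : cs.length (g⁻¹ * u) = cs.length (u⁻¹ * g) := by
      rw [← cs.length_inv (g⁻¹ * u), mul_inv_rev, inv_inv]
    rw [h1]
    exact hmin u⁻¹ ((spS cs S).inv_mem hu)
  intro u hu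
  have h2 := coset_min_right cs hmin' u⁻¹ ((spS cs S).inv_mem hu)
  calc cs.length (u * g) = cs.length ((u * g)⁻¹) := (cs.length_inv _).symm
    _ = cs.length (g⁻¹ * u⁻¹) := by rw [mul_inv_rev]
    _ = cs.length g⁻¹ + cs.length u⁻¹ := h2
    _ = cs.length u + cs.length g := by rw [cs.length_inv, cs.length_inv]; omega


section GeoRep

variable {V : Type*} [Fintype V] (M : CoxeterMatrix V)

/-- Cosine matrix of the geometric representation; `0` (i.e. `∞`) gets `-1`. -/
noncomputable def Cc (a b : V) : ℝ :=
  if M a b = 0 then -1 else -Real.cos (Real.pi / (M a b : ℕ))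

theorem Cc_symm (a b : V) : Cc M a b = Cc M b a := by
  unfold Cc; rw [M.symmetric a b]

theorem Cc_diag (a : V) : Cc M a a = 1 := by
  unfold Cc
  rw [if_neg (by rw [M.diagonal]; omega), M.diagonal]
  push_cast
  rw [div_one, Real.cos_pi]
  norm_num

/-- bilinear form against a basis vector -/
noncomputable def bil (a : V) (x : V → ℝ) : ℝ := ∑ j, Cc M a j * x j

noncomputable def ev (a : V) : V → ℝ := fun b => if a = b then 1 else 0

theorem bil_add (a : V) (x y : V → ℝ) : bil M a (x + y) = bil M a x + bil M a y := by
  unfold bil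
  rw [← Finset.sum_add_distrib]
  apply Finset.sum_congr rfl
  intro j _
  show Cc M a j * (x j + y j) = _
  ring

theorem bil_smul (a : V) (r : ℝ) (x : V → ℝ) : bil M a (r • x) = r * bil M a x := by
  unfold bil
  rw [Finset.mul_sum]
  apply Finset.sum_congr rfl
  intro j _
  show Cc M a j * (r * x j) = _
  ring

theorem bil_sub (a : V) (x y : V → ℝ) : bil M a (x - y) = bil M a x - bil M a y := by
  unfold bil
  rw [← Finset.sum_sub_distrib]
  apply Finset.sum_congr rfl
  intro j _
  show Cc M a j * (x j - y j) = _
  ring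

theorem bil_zero (a : V) : bil M a (0 : V → ℝ) = 0 := by
  unfold bil
  apply Finset.sum_eq_zero
  intro j _
  show Cc M a j * 0 = 0
  ring

theorem bil_ev (a b : V) : bil M a (ev b) = Cc M a b := by
  unfold bil ev
  rw [show ∑ j, Cc M a j * (if b = j then (1:ℝ) else 0)
      = ∑ j, (if b = j then Cc M a j else 0) from
    Finset.sum_congr rfl fun j _ => by split <;> ring]
  rw [Finset.sum_ite_eq Finset.univ b (fun j => Cc M a j)]
  simp

/-- geometric reflection -/
noncomputable def grefl (a : V) : Function.End (V → ℝ) :=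
  fun x => x - (2 * bil M a x) • ev a

theorem endMulR (f g : Function.End (V → ℝ)) (x : V → ℝ) : (f * g) x = f (g x) := rfl

theorem grefl_combo_a {a b : V} (p : V → ℝ) (hpa : bil M a p = 0) (α β : ℝ) :
    grefl M a (p + α • ev a + β • ev b)
      = p + (-α - 2 * Cc M a b * β) • ev a + β • ev b := by
  have hbx : bil M a (p + α • ev a + β • ev b) = α + Cc M a b * β := by
    rw [bil_add, bil_add, bil_smul, bil_smul, hpa, bil_ev, bil_ev, Cc_diag]
    ring
  show (p + α • ev a + β • ev b) - (2 * bil M a (p + α • ev a + β • ev b)) • ev a = _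
  rw [hbx]
  module

theorem grefl_combo_b {a b : V} (p : V → ℝ) (hpb : bil M b p = 0) (α β : ℝ) :
    grefl M b (p + α • ev a + β • ev b)
      = p + α • ev a + (-β - 2 * Cc M a b * α) • ev b := by
  have hbx : bil M b (p + α • ev a + β • ev b) = Cc M a b * α + β := by
    rw [bil_add, bil_add, bil_smul, bil_smul, hpb, bil_ev, bil_ev, Cc_diag, Cc_symm M b a]
    ring
  show (p + α • ev a + β • ev b) - (2 * bil M b (p + α • ev a + β • ev b)) • ev b = _
  rw [hbx]
  module

end GeoRep

/-- the induced map on the coefficient plane -/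
noncomputable def Tc (c : ℝ) : ℝ × ℝ → ℝ × ℝ :=
  fun q => ((4*c^2 - 1) * q.1 + 2*c*q.2, -(2*c)*q.1 - q.2)

theorem Tc_iter_formula {m : ℕ} (hm : 3 ≤ m) (k : ℕ) (q : ℝ × ℝ) :
    (Tc (-Real.cos (Real.pi / m)))^[k] q
      = (Real.cos (2*k*(Real.pi/m)) * q.1
            - (Real.sin (2*k*(Real.pi/m)) / Real.sin (Real.pi/m))
              * ((-Real.cos (Real.pi / m)) * q.1 + q.2),
         Real.cos (2*k*(Real.pi/m)) * q.2
            + (Real.sin (2*k*(Real.pi/m)) / Real.sin (Real.pi/m))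
              * (q.1 + (-Real.cos (Real.pi / m)) * q.2)) := by
  set θ := Real.pi / m with hθ
  set c := -Real.cos θ with hc
  set s := Real.sin θ with hs
  have hθpos : 0 < θ := by
    rw [hθ]
    apply div_pos Real.pi_pos
    exact_mod_cast (by omega : 0 < m)
  have hθlt : θ < Real.pi / 2 := by
    rw [hθ]
    rw [div_lt_div_iff₀ (by exact_mod_cast (by omega : (0:ℕ) < m)) (by norm_num)]
    have : (3:ℝ) ≤ m := by exact_mod_cast hm
    nlinarith [Real.pi_pos]
  have hspos : 0 < s := by
    rw [hs]
    apply Real.sin_pos_of_pos_of_lt_pi hθpos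
    linarith [Real.pi_pos]
  have hsne : s ≠ 0 := ne_of_gt hspos
  have hs2 : s^2 = 1 - c^2 := by
    rw [hs, hc]
    have := Real.sin_sq_add_cos_sq θ
    nlinarith [this]
  have hcos2 : Real.cos (2*θ) = 2*c^2 - 1 := by
    rw [Real.cos_two_mul, hc]
    ring
  have hsin2 : Real.sin (2*θ) = -(2*s*c) := by
    rw [Real.sin_two_mul, hs, hc]
    ring
  induction k with
  | zero =>
      simp
  | succ k ih =>
      rw [Function.iterate_succ_apply', ih]
      set C := Real.cos (2*k*θ) with hC
      set U := Real.sin (2*k*θ) / s with hU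
      have hsinU : Real.sin (2*k*θ) = U * s := by
        rw [hU]
        field_simp
      have hangle : 2*((k:ℝ)+1)*θ = 2*k*θ + 2*θ := by ring
      have hCk : Real.cos (2*(((k+1 : ℕ)):ℝ)*θ) = C*(2*c^2-1) + 2*c*s^2*U := by
        push_cast
        rw [hangle, Real.cos_add, hcos2, hsin2, hsinU, hC]
        ring
      have hUk : Real.sin (2*(((k+1 : ℕ)):ℝ)*θ) / s = U*(2*c^2-1) - 2*c*C := by
        push_cast
        rw [hangle, Real.sin_add, hcos2, hsin2, hsinU, hC]
        field_simp
        ring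
      rw [hCk, hUk]
      unfold Tc
      refine Prod.ext ?_ ?_
      · show (4*c^2-1) * (C * q.1 - U * (c*q.1 + q.2)) + 2*c*(C*q.2 + U*(q.1 + c*q.2)) = _
        show _ = (C*(2*c^2-1) + 2*c*s^2*U) * q.1
          - (U*(2*c^2-1) - 2*c*C) * (c*q.1 + q.2)
        linear_combination (-(2*c*U*q.1)) * hs2
      · show -(2*c) * (C * q.1 - U * (c*q.1 + q.2)) - (C*q.2 + U*(q.1 + c*q.2)) = _
        show _ = (C*(2*c^2-1) + 2*c*s^2*U) * q.2
          + (U*(2*c^2-1) - 2*c*C) * (q.1 + c*q.2)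
        linear_combination (-(2*c*U*q.2)) * hs2

theorem Tc_iter_id {m : ℕ} (hm : 2 ≤ m) :
    (Tc (-Real.cos (Real.pi / m)))^[m] = id := by
  funext q
  rcases eq_or_lt_of_le hm with h2 | h3
  · -- m = 2
    have hc : -Real.cos (Real.pi / (m:ℕ)) = 0 := by
      rw [← h2]
      push_cast
      rw [Real.cos_pi_div_two]
      ring
    rw [hc, ← h2]
    show Tc 0 (Tc 0 q) = q
    unfold Tc
    refine Prod.ext ?_ ?_ <;> (show _ = _) <;> push_cast <;> ring
  · have hm3 : 3 ≤ m := h3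
    rw [Tc_iter_formula hm3 m q]
    have hangle : 2*(m:ℝ)*(Real.pi/m) = 2*Real.pi := by
      field_simp
    rw [hangle, Real.cos_two_pi, Real.sin_two_pi]
    refine Prod.ext ?_ ?_ <;> (show _ = _) <;> simp


section GeoRep2

variable {V : Type*} [Fintype V] (M : CoxeterMatrix V)

theorem grefl_iter {a b : V} (p : V → ℝ) (hpa : bil M a p = 0) (hpb : bil M b p = 0)
    (k : ℕ) (α β : ℝ) :
    ((grefl M a * grefl M b) ^ k) (p + α • ev a + β • ev b)
      = p + ((Tc (Cc M a b))^[k] (α, β)).1 • ev a + ((Tc (Cc M a b))^[k] (α, β)).2 • ev b := by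
  induction k generalizing α β with
  | zero =>
      show (p + α • ev a + β • ev b) = _
      rfl
  | succ k ih =>
      have h1 : ((grefl M a * grefl M b) ^ (k+1)) (p + α • ev a + β • ev b)
          = ((grefl M a * grefl M b) ^ k) ((grefl M a * grefl M b) (p + α • ev a + β • ev b)) := by
        rw [pow_succ, endMulR]
      rw [h1, endMulR, grefl_combo_b M p hpb, grefl_combo_a M p hpa, ih]
      rw [Function.iterate_succ_apply]
      have h2 : Tc (Cc M a b) (α, β)
          = (-α - 2 * Cc M a b * (-β - 2 * Cc M a b * α), -β - 2 * Cc M a b * α) := by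
        unfold Tc
        refine Prod.ext ?_ ?_ <;> (show _ = _ ; ring)
      rw [h2]

theorem grefl_invol (a : V) (x : V → ℝ) : grefl M a (grefl M a x) = x := by
  have h1 : bil M a (grefl M a x) = - bil M a x := by
    show bil M a (x - (2 * bil M a x) • ev a) = _
    rw [bil_sub, bil_smul, bil_ev, Cc_diag]
    ring
  show (grefl M a x) - (2 * bil M a (grefl M a x)) • ev a = x
  rw [h1]
  show (x - (2 * bil M a x) • ev a) - (2 * -bil M a x) • ev a = x
  module

theorem grefl_liftable : M.IsLiftable (grefl M) := by
  intro a b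
  by_cases h0 : M a b = 0
  · rw [h0, pow_zero]
  by_cases hab : a = b
  · subst hab
    rw [M.diagonal, pow_one]
    funext x
    rw [endMulR]
    exact grefl_invol M a x
  -- now 2 ≤ M a b
  have hm2 : 2 ≤ M a b := by
    have := M.off_diagonal a b hab
    omega
  funext x
  set c := Cc M a b with hcdef
  have hcval : c = -Real.cos (Real.pi / (M a b : ℕ)) := by
    rw [hcdef]; unfold Cc; rw [if_neg h0]
  -- bounds on c
  have hθpos : 0 < Real.pi / (M a b : ℕ) := by
    apply div_pos Real.pi_pos
    exact_mod_cast (by omega : 0 < M a b)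
  have hθle : Real.pi / (M a b : ℕ) ≤ Real.pi / 2 := by
    apply div_le_div_of_nonneg_left (le_of_lt Real.pi_pos) (by norm_num)
    exact_mod_cast hm2
  have hcos_nonneg : 0 ≤ Real.cos (Real.pi / (M a b : ℕ)) := by
    apply Real.cos_nonneg_of_mem_Icc
    constructor
    · linarith [Real.pi_pos]
    · exact hθle
  have hcos_lt : Real.cos (Real.pi / (M a b : ℕ)) < 1 := by
    rcases lt_or_eq_of_le (Real.cos_le_one (Real.pi / (M a b : ℕ))) with h | h
    · exact h
    · exfalso
      have h0 := (Real.cos_eq_one_iff_of_lt_of_lt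
        (by linarith [Real.pi_pos]) (by linarith [Real.pi_pos])).mp h
      linarith
  have hc2 : c^2 < 1 := by
    rw [hcval]
    nlinarith
  have hden : (1:ℝ) - c^2 ≠ 0 := by nlinarith
  -- decompose x
  set A := bil M a x with hA
  set B := bil M b x with hB
  set lam := (A - c*B)/(1 - c^2) with hlam
  set mu := (B - c*A)/(1 - c^2) with hmu
  set p := x - lam • ev a - mu • ev b with hp
  have hpa : bil M a p = 0 := by
    rw [hp, bil_sub, bil_sub, bil_smul, bil_smul, bil_ev, bil_ev, Cc_diag, ← hA, ← hcdef,
      hlam, hmu]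
    field_simp
    ring
  have hpb : bil M b p = 0 := by
    rw [hp, bil_sub, bil_sub, bil_smul, bil_smul, bil_ev, bil_ev, Cc_diag, Cc_symm M b a,
      ← hB, ← hcdef, hlam, hmu]
    field_simp
    ring
  have hx : x = p + lam • ev a + mu • ev b := by
    rw [hp]
    module
  have hiter := grefl_iter M p hpa hpb (M a b) lam mu
  show ((grefl M a * grefl M b) ^ M a b) x = x
  rw [hx, hiter, show Cc M a b = -Real.cos (Real.pi / (M a b : ℕ)) from hcval,
    Tc_iter_id hm2]
  rfl

end GeoRep2

section InfOrder

variable {V : Type*} [Fintype V] {W : Type*} [Group W] {M : CoxeterMatrix V}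
  (cs : CoxeterSystem M W)

theorem Tc_neg_one_iter (K : ℕ) : (Tc (-1))^[K] (1, 0) = ((2*K+1 : ℝ), (2*K : ℝ)) := by
  induction K with
  | zero => simp
  | succ K ih =>
      rw [Function.iterate_succ_apply', ih]
      unfold Tc
      refine Prod.ext ?_ ?_ <;> (show _ = _) <;> push_cast <;> ring

theorem pow_simple_mul_simple_eq_one {v t : V} (hM : M v t = 0) {K : ℕ}
    (hK : (cs.simple v * cs.simple t) ^ K = 1) : K = 0 := by
  have hvt : v ≠ t := by
    rintro rfl
    rw [M.diagonal] at hM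
    omega
  set Fg : W →* Function.End (V → ℝ) := cs.lift ⟨grefl M, grefl_liftable M⟩ with hFg
  have h1 : (grefl M v * grefl M t) ^ K = 1 := by
    have := congrArg Fg hK
    rw [map_pow, map_mul, map_one] at this
    rw [hFg] at this
    rw [cs.lift_apply_simple, cs.lift_apply_simple] at this
    exact this
  have hc : Cc M v t = -1 := by unfold Cc; rw [if_pos hM]
  have h0a : bil M v (0 : V → ℝ) = 0 := bil_zero M v
  have h0b : bil M t (0 : V → ℝ) = 0 := bil_zero M t
  have h2 := grefl_iter M (0 : V → ℝ) h0a h0b K 1 0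
  rw [hc, Tc_neg_one_iter K, h1] at h2
  have h3 : (0 : V → ℝ) + (1:ℝ) • ev v + (0:ℝ) • ev t
      = (0 : V → ℝ) + ((2*K+1 : ℝ)) • ev v + ((2*K : ℝ)) • ev t := by
    calc (0 : V → ℝ) + (1:ℝ) • ev v + (0:ℝ) • ev t
        = (1 : Function.End (V → ℝ)) ((0 : V → ℝ) + (1:ℝ) • ev v + (0:ℝ) • ev t) := rfl
      _ = _ := h2
  have h4 := congrFun h3 v
  simp only [Pi.add_apply, Pi.smul_apply, Pi.zero_apply, smul_eq_mul] at h4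
  unfold ev at h4
  rw [if_pos rfl, if_neg (fun hh => hvt hh.symm)] at h4
  have h5 : (1:ℝ) = 2*K+1 := by linarith [h4]
  have : (K:ℝ) = 0 := by linarith
  exact_mod_cast this

end InfOrder

section Main

variable {V : Type*} {W : Type*} [Group W] {M : CoxeterMatrix V} (cs : CoxeterSystem M W)

-- ### alternating words

theorem chain'_ne_of_isReduced : ∀ {ω : List V}, cs.IsReduced ω → ω.IsChain (· ≠ ·) := by
  intro ω
  induction ω with
  | nil => intro _; simp
  | cons a tail ih =>
      intro h
      cases tail with
      | nil => simp
      | cons b rest =>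
          rw [List.isChain_cons_cons]
          have htail : cs.IsReduced (b :: rest) := by
            have := h.drop 1
            simpa using this
          refine ⟨?_, ih htail⟩
          intro hab
          subst hab
          have hprod : cs.wordProd (a :: a :: rest) = cs.wordProd rest := by
            rw [cs.wordProd_cons, cs.wordProd_cons, cs.simple_mul_simple_cancel_left]
          have h1 : cs.length (cs.wordProd (a :: a :: rest)) ≤ rest.length := by
            rw [hprod]; exact cs.length_wordProd_le rest
          have h2 : cs.length (cs.wordProd (a :: a :: rest)) = (a :: a :: rest).length := h
          simp at h2
          omega

theorem alt_prod_pow {v t : V} : ∀ (K : ℕ) (ω : List V), ω.length = 2*K →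
    (∀ i ∈ ω, i = v ∨ i = t) → ω.IsChain (· ≠ ·) → (ω.head? = some v ∨ ω = []) →
    cs.wordProd ω = (cs.simple v * cs.simple t) ^ K := by
  intro K
  induction K with
  | zero =>
      intro ω hlen _ _ _
      have : ω = [] := List.length_eq_zero_iff.mp (by omega)
      subst this
      simp
  | succ K ih =>
      intro ω hlen hmem hchain hhead
      match ω, hlen with
      | a :: b :: rest, hlen =>
        have ha : a = v := by
          rcases hhead with h | h
          · rw [List.head?_cons] at h
            exact Option.some.inj h
          · simp at h
        have hab : a ≠ b := (List.isChain_cons_cons.mp hchain).1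
        have hb : b = t := by
          rcases hmem b (by simp) with h | h
          · exfalso; rw [ha] at hab; exact hab h.symm
          · exact h
        have hchain_rest : rest.IsChain (· ≠ ·) :=
          ((List.isChain_cons_cons.mp hchain).2).tail
        have hbr : ∀ y ∈ rest.head?, b ≠ y :=
          (List.isChain_cons.mp (List.isChain_cons_cons.mp hchain).2).1
        have hhead_rest : rest.head? = some v ∨ rest = [] := by
          cases rest with
          | nil => right; rfl
          | cons c rest' =>
              left
              have hc : c = v := by
                rcases hmem c (by simp) with h | h
                · exact h
                · exfalso
                  have := hbr c (by simp)
                  rw [hb, h] at this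
                  exact this rfl
              simp [hc]
        have hlen_rest : rest.length = 2*K := by
          simp at hlen
          omega
        have hrest := ih rest hlen_rest (fun i hi => hmem i (by simp [hi])) hchain_rest hhead_rest
        rw [cs.wordProd_cons, cs.wordProd_cons, hrest, ha, hb, pow_succ']
        rw [← mul_assoc]

-- ### the core argument

theorem conj_simple_eq_iff (i : V) (r y : W) :
    cs.simple i * r * cs.simple i = y ↔ r = cs.simple i * y * cs.simple i := by
  have h := conj_eq_iff (cs.simple i) r y
  rw [cs.inv_simple] at h
  exact h

theorem refl_conj_sq (i k : V) :
    (cs.simple i * cs.simple k * cs.simple i) * (cs.simple i * cs.simple k * cs.simple i) = 1 := by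
  simp only [mul_assoc, cs.simple_mul_simple_cancel_left]
  exact cs.simple_mul_simple_self i

set_option maxHeartbeats 1000000 in
theorem core [Fintype V] {Δ : Set V}
    (hmax : ∀ w : V, w ∉ Δ → ∃ t ∈ Δ, M w t = 0) {h : W}
    (hnorm : h ∈ Subgroup.normalizer (spS cs Δ : Set W))
    (hmin : ∀ p ∈ spS cs Δ, ∀ q ∈ spS cs Δ, cs.length h ≤ cs.length (p * h * q)) :
    h = 1 := by
  by_contra hne
  set P := spS cs Δ with hP
  have hminR : ∀ u ∈ P, cs.length h ≤ cs.length (h * u) := by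
    intro u hu
    have := hmin 1 P.one_mem u hu
    rwa [one_mul] at this
  have hminL : ∀ u ∈ P, cs.length h ≤ cs.length (u * h) := by
    intro u hu
    have := hmin u hu 1 P.one_mem
    rwa [mul_one] at this
  have hL : ∀ u ∈ P, cs.length (u * h) = cs.length u + cs.length h := coset_min_left cs hminL
  -- right descent v ∉ Δ
  obtain ⟨v, hv⟩ := cs.exists_rightDescent_of_ne_one hne
  rw [CoxeterSystem.IsRightDescent] at hv
  have hvΔ : v ∉ Δ := by
    intro hvin
    have h1 := hminR (cs.simple v) (simple_mem_spS cs hvin)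
    omega
  obtain ⟨t, htΔ, hMvt⟩ := hmax v hvΔ
  have hvt : v ≠ t := by
    rintro rfl
    rw [M.diagonal] at hMvt
    omega
  -- the relation h * s t = s t' * h
  have hstP : cs.simple t ∈ P := simple_mem_spS cs htΔ
  have hxP : h * cs.simple t * h⁻¹ ∈ P :=
    (Subgroup.mem_normalizer_iff.mp hnorm (cs.simple t)).mp hstP
  set x := h * cs.simple t * h⁻¹ with hxdef
  have hxh : x * h = h * cs.simple t := by rw [hxdef]; group
  have hstne : cs.simple t ≠ 1 := by
    intro h1
    have h2 := cs.length_simple t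
    rw [h1, cs.length_one] at h2
    omega
  have hxne : x ≠ 1 := by
    intro hx1
    apply hstne
    have h3 : h⁻¹ * x * h = cs.simple t := by rw [hxdef]; group
    rw [hx1] at h3
    rw [← h3]
    group
  have hxlen : cs.length x = 1 := by
    have h1 : cs.length (x * h) = cs.length x + cs.length h := hL x hxP
    have h2 : cs.length (h * cs.simple t) ≤ cs.length h + 1 := by
      have h4 := cs.length_mul_le h (cs.simple t)
      rwa [cs.length_simple] at h4
    rw [hxh] at h1
    have h3 : cs.length x ≠ 0 := fun hc => hxne (cs.length_eq_zero_iff.mp hc)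
    omega
  obtain ⟨ωx, hωxΔ, hωxred, hωxprod⟩ := mem_spS_reduced cs hxP
  have hωxlen : ωx.length = 1 := by
    have := hωxred
    unfold CoxeterSystem.IsReduced at this
    rw [hωxprod, hxlen] at this
    omega
  obtain ⟨t', hωx⟩ := List.length_eq_one_iff.mp hωxlen
  have ht'Δ : t' ∈ Δ := hωxΔ t' (by simp [hωx])
  have hst' : cs.simple t' = x := by rw [← hωxprod, hωx, cs.wordProd_singleton]
  have hrel : h * cs.simple t = cs.simple t' * h := by rw [hst']; exact hxh.symm
  have hconj : h * cs.simple t * h⁻¹ = cs.simple t' := by rw [hst', hxdef]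
  have hconj' : h⁻¹ * cs.simple t' * h = cs.simple t := by rw [← hconj]; group
  have hlhst : cs.length (h * cs.simple t) = cs.length h + 1 := by
    rw [hrel, hL (cs.simple t') (simple_mem_spS cs ht'Δ), cs.length_simple]
    omega
  -- eta facts
  have hetav : eta cs h (cs.simple v) = 1 :=
    (eta_eq_one_iff cs (cs.isReflection_simple v)).mpr hv
  have hetaconj : ∀ r : W, eta cs h (cs.simple t * r * cs.simple t) = eta cs h r := by
    intro r
    have hcyc : h = cs.simple t' * (h * cs.simple t) := by
      rw [hrel, ← mul_assoc, cs.simple_mul_simple_self, one_mul]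
    have e1 : eta cs h (cs.simple t * r * cs.simple t)
        = eta cs (h * cs.simple t) (cs.simple t * r * cs.simple t)
          + eta cs (cs.simple t')
            ((h * cs.simple t) * (cs.simple t * r * cs.simple t) * (h * cs.simple t)⁻¹) := by
      conv_lhs => rw [hcyc]
      exact eta_cocycle cs (cs.simple t') (h * cs.simple t) _
    have e2 : (h * cs.simple t) * (cs.simple t * r * cs.simple t) * (h * cs.simple t)⁻¹
        = h * r * h⁻¹ := by
      rw [mul_inv_rev, cs.inv_simple]
      simp only [mul_assoc, cs.simple_mul_simple_cancel_left]
    have e3 : eta cs (h * cs.simple t) (cs.simple t * r * cs.simple t)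
        = eta cs (cs.simple t) (cs.simple t * r * cs.simple t) + eta cs h r := by
      have e5 := eta_cocycle cs h (cs.simple t) (cs.simple t * r * cs.simple t)
      have e4 : cs.simple t * (cs.simple t * r * cs.simple t) * (cs.simple t)⁻¹ = r := by
        rw [cs.inv_simple]
        simp only [mul_assoc]
        rw [cs.simple_mul_simple_cancel_left, cs.simple_mul_simple_self, mul_one]
      rw [e4] at e5
      exact e5
    rw [e1, e3, e2, eta_simple, eta_simple]
    have hiff1 : (cs.simple t * r * cs.simple t = cs.simple t) ↔ r = cs.simple t := by
      have h6 := conj_simple_eq_iff cs t r (cs.simple t)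
      rw [show cs.simple t * cs.simple t * cs.simple t = cs.simple t from by
        rw [cs.simple_mul_simple_self, one_mul]] at h6
      exact h6
    have hiff2 : (h * r * h⁻¹ = cs.simple t') ↔ r = cs.simple t := by
      constructor
      · intro hh
        have h7 : h⁻¹ * (h * r * h⁻¹) * h = h⁻¹ * cs.simple t' * h := by rw [hh]
        rw [show h⁻¹ * (h * r * h⁻¹) * h = r from by group, hconj'] at h7
        exact h7
      · intro hh
        rw [hh, ← hconj']
        group
    have hz2 : ∀ (a b : ZMod 2), a + b + a = b := by decide
    by_cases hr : r = cs.simple t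
    · simp only [hiff1, hiff2, if_pos hr]
      exact hz2 1 _
    · simp only [hiff1, hiff2, if_neg hr]
      exact hz2 0 _
  have hreflconj : cs.IsReflection (cs.simple t * cs.simple v * cs.simple t) := by
    have h8 := (cs.isReflection_simple v).conj (cs.simple t)
    rwa [cs.inv_simple] at h8
  have hetac : eta cs h (cs.simple t * cs.simple v * cs.simple t) = 1 := by
    rw [hetaconj (cs.simple v)]
    exact hetav
  have hltc : cs.length (h * (cs.simple t * cs.simple v * cs.simple t)) < cs.length h :=
    (eta_eq_one_iff cs hreflconj).mp hetac
  -- the {v,t} coset decomposition h = m * e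
  set J : Set V := {v, t} with hJ
  set Q := spS cs J with hQ
  have hvJ : v ∈ J := by simp [hJ]
  have htJ : t ∈ J := by simp [hJ]
  have hSne : {n : ℕ | ∃ u ∈ Q, cs.length (h * u) = n}.Nonempty :=
    ⟨cs.length h, 1, Q.one_mem, by rw [mul_one]⟩
  obtain ⟨u0, hu0Q, hu0len⟩ := Nat.sInf_mem hSne
  set m := h * u0 with hm
  have hmlen : cs.length m = sInf {n : ℕ | ∃ u ∈ Q, cs.length (h * u) = n} := by
    rw [hm, hu0len]
  have hminQ : ∀ u ∈ Q, cs.length m ≤ cs.length (m * u) := by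
    intro u hu
    have h9 : cs.length (h * (u0 * u)) ∈ {n : ℕ | ∃ u ∈ Q, cs.length (h * u) = n} :=
      ⟨u0 * u, Q.mul_mem hu0Q hu, rfl⟩
    have h10 := Nat.sInf_le h9
    rw [hmlen, hm, mul_assoc]
    exact h10
  have hQadd := coset_min_right cs hminQ
  set e := u0⁻¹ with he
  have heQ : e ∈ Q := Q.inv_mem hu0Q
  have hme : m * e = h := by rw [hm, he, mul_assoc, mul_inv_cancel, mul_one]
  have hlen_h : cs.length h = cs.length m + cs.length e := by
    rw [← hme]
    exact hQadd e heQ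
  have hkey : ∀ r ∈ Q, cs.length (h * r) = cs.length m + cs.length (e * r) := by
    intro r hr
    rw [← hme, mul_assoc]
    exact hQadd (e * r) (Q.mul_mem heQ hr)
  have hsvQ : cs.simple v ∈ Q := simple_mem_spS cs hvJ
  have hstQ : cs.simple t ∈ Q := simple_mem_spS cs htJ
  have hrQ : cs.simple t * cs.simple v * cs.simple t ∈ Q :=
    Q.mul_mem (Q.mul_mem hstQ hsvQ) hstQ
  have f1 : cs.length (e * cs.simple v) < cs.length e := by
    have := hkey (cs.simple v) hsvQ
    omega
  have f2 : cs.length (e * (cs.simple t * cs.simple v * cs.simple t)) < cs.length e := by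
    have := hkey _ hrQ
    omega
  have f3 : cs.length e < cs.length (e * cs.simple t) := by
    have := hkey (cs.simple t) hstQ
    omega
  -- reduced {v,t}-word for e
  have hene : e ≠ 1 := by
    intro h9
    rw [h9, one_mul, cs.length_one, cs.length_simple] at f1
    omega
  obtain ⟨α, hαJ, hαred, hαprod⟩ := mem_spS_reduced cs heQ
  have hαne : α ≠ [] := by
    rintro rfl
    exact hene (by rw [← hαprod, cs.wordProd_nil])
  have hαlen : cs.length e = α.length := by
    rw [← hαprod]
    exact hαred
  have hchainα := chain'_ne_of_isReduced cs hαred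
  have hmemvt : ∀ i ∈ α, i = v ∨ i = t := by
    intro i hi
    have := hαJ i hi
    rw [hJ] at this
    simpa using this
  -- last letter is v
  have hlast : α.getLast hαne = v := by
    rcases hmemvt _ (List.getLast_mem hαne) with h10 | h10
    · exact h10
    · exfalso
      have hsplit : α.dropLast ++ [α.getLast hαne] = α := List.dropLast_append_getLast hαne
      have h11 : e * cs.simple t = cs.wordProd α.dropLast := by
        rw [← hαprod]
        conv_lhs => rw [← hsplit]
        rw [cs.wordProd_append, cs.wordProd_singleton, h10, mul_assoc,
          cs.simple_mul_simple_self, mul_one]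
      have h12 : cs.length (e * cs.simple t) ≤ α.dropLast.length := by
        rw [h11]
        exact cs.length_wordProd_le _
      rw [List.length_dropLast] at h12
      have hα1 : 1 ≤ α.length := List.length_pos_iff.mpr hαne
      omega
  -- strong exchange entry for s t * s v * s t
  have hetae : eta cs e (cs.simple t * cs.simple v * cs.simple t) = 1 :=
    (eta_eq_one_iff cs hreflconj).mpr f2
  have hcount : ((cs.rightInvSeq α).count (cs.simple t * cs.simple v * cs.simple t) : ZMod 2) = 1 := by
    rw [← eta_count, hαprod]
    exact hetae
  have hmem2 : (cs.simple t * cs.simple v * cs.simple t) ∈ cs.rightInvSeq α := by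
    by_contra hc
    rw [List.count_eq_zero_of_not_mem hc] at hcount
    exact absurd hcount (by decide)
  obtain ⟨j, hjlen', hget⟩ := List.mem_iff_getElem.mp hmem2
  have hjlen : j < α.length := by
    rw [cs.length_rightInvSeq] at hjlen'
    exact hjlen'
  have hentry : (cs.rightInvSeq α).getD j 1 = cs.simple t * cs.simple v * cs.simple t := by
    rw [List.getD_eq_getElem _ _ hjlen', hget]
  have hentry2 : (cs.rightInvSeq α).getD j 1
      = (cs.wordProd (α.drop (j+1)))⁻¹ * cs.simple (α.get ⟨j, hjlen⟩)
        * cs.wordProd (α.drop (j+1)) := by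
    rw [cs.getD_rightInvSeq]
    congr
    rw [List.getElem?_eq_getElem hjlen]
    rfl
  set d := α.drop (j+1) with hd
  set aj := α.get ⟨j, hjlen⟩ with haj
  set u := d.reverse ++ aj :: d with hu
  have huprod : cs.wordProd u = cs.simple t * cs.simple v * cs.simple t := by
    rw [hu, cs.wordProd_append, cs.wordProd_cons, cs.wordProd_reverse, ← mul_assoc,
      ← hentry2, hentry]
  -- structural facts about u
  have hdsub : ∀ i ∈ d, i ∈ α := fun i hi => (List.drop_sublist (j+1) α).subset hi
  have hmemu : ∀ i ∈ u, i = v ∨ i = t := by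
    intro i hi
    rw [hu] at hi
    rcases List.mem_append.mp hi with h13 | h13
    · exact hmemvt i (hdsub i (List.mem_reverse.mp h13))
    · rcases List.mem_cons.mp h13 with h14 | h14
      · rw [h14, haj]
        exact hmemvt _ (α.get_mem _)
      · exact hmemvt i (hdsub i h14)
  have hdropj : α.drop j = aj :: d := by
    rw [hd, haj]
    rw [List.drop_eq_getElem_cons hjlen]
    rfl
  have hchain_ajd : (aj :: d).IsChain (· ≠ ·) := by
    rw [← hdropj]
    exact hchainα.suffix (List.drop_suffix j α)
  have hchain_d : d.IsChain (· ≠ ·) := hchain_ajd.tail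
  have hchain_rev : d.reverse.IsChain (· ≠ ·) := by
    rw [List.isChain_reverse]
    exact hchain_d.imp (fun a b hab => hab.symm)
  have hhead_d : ∀ y ∈ d.head?, aj ≠ y := (List.isChain_cons.mp hchain_ajd).1
  have hchainu : u.IsChain (· ≠ ·) := by
    rw [hu, List.isChain_append]
    refine ⟨hchain_rev, hchain_ajd, ?_⟩
    intro x hx y hy
    rw [List.head?_cons] at hy
    have hy' : y = aj := (Option.some.inj hy).symm
    rw [List.getLast?_reverse] at hx
    subst hy'
    exact fun hxy => (hhead_d x hx) hxy.symm
  -- head and last of u are v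
  have hdlast : d ≠ [] → d.getLast? = some v := by
    intro hdne
    have h15 : α.getLast? = d.getLast? := by
      conv_lhs => rw [← List.take_append_drop (j+1) α, ← hd]
      exact List.getLast?_append_of_ne_nil _ hdne
    rw [← h15, List.getLast?_eq_getLast_of_ne_nil hαne, hlast]
  have hajv : d = [] → aj = v := by
    intro hdnil
    have h16 : α.length ≤ j + 1 := by
      have := List.drop_eq_nil_iff.mp (hd ▸ hdnil)
      omega
    rw [haj]
    have h17' : j = α.length - 1 := by omega
    have h18 : α.get ⟨j, hjlen⟩ = α.getLast hαne := by
      subst h17'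
      rw [List.getLast_eq_getElem]
      rfl
    rw [h18, hlast]
  have hrevne : d ≠ [] → d.reverse ≠ [] := by
    intro hdne hc
    exact hdne (by simpa using hc)
  have huhead : u.head? = some v := by
    by_cases hdnil : d = []
    · rw [hu, hdnil]
      simp [hajv hdnil]
    · rw [hu, List.head?_append_of_ne_nil _ (hrevne hdnil), List.head?_reverse]
      exact hdlast hdnil
  have hulast : u.getLast? = some v := by
    by_cases hdnil : d = []
    · rw [hu, hdnil]
      simp [hajv hdnil]
    · rw [hu, List.getLast?_append_of_ne_nil _ (List.cons_ne_nil aj d)]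
      obtain ⟨b, rest, hbd⟩ := List.exists_cons_of_ne_nil hdnil
      rw [hbd, List.getLast?_cons_cons, ← hbd]
      exact hdlast hdnil
  -- assemble u' and get the contradiction
  set u' := u ++ [t, v, t] with hu'
  have hu'prod : cs.wordProd u' = 1 := by
    rw [hu', cs.wordProd_append, huprod]
    have h19 : cs.wordProd [t, v, t] = cs.simple t * cs.simple v * cs.simple t := by
      rw [cs.wordProd_cons, cs.wordProd_cons, cs.wordProd_singleton, ← mul_assoc]
    rw [h19]
    exact refl_conj_sq cs t v
  have hulen : u.length = 2 * d.length + 1 := by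
    rw [hu]
    simp
    omega
  have hu'len : u'.length = 2 * (d.length + 2) := by
    rw [hu', List.length_append, hulen]
    simp
    omega
  have hu'mem : ∀ i ∈ u', i = v ∨ i = t := by
    intro i hi
    rw [hu'] at hi
    rcases List.mem_append.mp hi with h20 | h20
    · exact hmemu i h20
    · rw [List.mem_cons, List.mem_cons, List.mem_singleton] at h20
      rcases h20 with h21 | h21 | h21
      exacts [Or.inr h21, Or.inl h21, Or.inr h21]
  have hune : u ≠ [] := by
    rw [hu]
    simp
  have hu'chain : u'.IsChain (· ≠ ·) := by
    rw [hu', List.isChain_append]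
    refine ⟨hchainu, ?_, ?_⟩
    · rw [List.isChain_cons_cons, List.isChain_cons_cons]
      exact ⟨fun hh => hvt hh.symm, hvt, by simp⟩
    · intro x hx y hy
      rw [hulast] at hx
      rw [List.head?_cons] at hy
      have hx' : x = v := by simpa using hx.symm
      have hy' : y = t := by simpa using hy.symm
      rw [hx', hy']
      exact hvt
  have hu'head : u'.head? = some v := by
    rw [hu', List.head?_append_of_ne_nil _ hune]
    exact huhead
  have h1eq := alt_prod_pow cs (d.length + 2) u' hu'len hu'mem hu'chain (Or.inl hu'head)
  rw [hu'prod] at h1eq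
  have hK0 := pow_simple_mul_simple_eq_one cs hMvt h1eq.symm
  omega


theorem maxClique_hmax {Δ : Set V} (hΔ : M.IsMaxClique Δ) :
    ∀ w : V, w ∉ Δ → ∃ t ∈ Δ, M w t = 0 := by
  intro w hw
  by_contra hc
  push_neg at hc
  have hclique : M.IsClique (Δ ∪ {w}) := by
    intro a ha b hb hab
    rcases ha with haΔ | haw
    · rcases hb with hbΔ | hbw
      · exact hΔ.1 haΔ hbΔ hab
      · have hbw' : b = w := hbw
        refine ⟨hab, ?_⟩
        rw [hbw', M.symmetric a w]
        exact hc a haΔ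
    · have haw' : a = w := haw
      rcases hb with hbΔ | hbw
      · refine ⟨hab, ?_⟩
        rw [haw']
        exact hc b hbΔ
      · exfalso
        apply hab
        have hbw' : b = w := hbw
        rw [haw', hbw']
  have heq := hΔ.2 (Δ ∪ {w}) hclique Set.subset_union_left
  exact hw (by rw [heq]; exact Set.mem_union_right _ rfl)

theorem normalizer_spS [Fintype V] {Δ : Set V}
    (hmax : ∀ w : V, w ∉ Δ → ∃ t ∈ Δ, M w t = 0) :
    Subgroup.normalizer (spS cs Δ : Set W) = spS cs Δ := by
  apply _root_.le_antisymm _ Subgroup.le_normalizer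
  intro g hg
  set P := spS cs Δ with hP
  have hSne : {n : ℕ | ∃ p ∈ P, ∃ q ∈ P, cs.length (p * g * q) = n}.Nonempty :=
    ⟨cs.length g, 1, P.one_mem, 1, P.one_mem, by rw [one_mul, mul_one]⟩
  obtain ⟨p, hp, q, hq, hpq⟩ := Nat.sInf_mem hSne
  set h := p * g * q with hh
  have hnormh : h ∈ Subgroup.normalizer (P : Set W) :=
    Subgroup.mul_mem _ (Subgroup.mul_mem _ (Subgroup.le_normalizer hp) hg)
      (Subgroup.le_normalizer hq)
  have hminh : ∀ p' ∈ P, ∀ q' ∈ P, cs.length h ≤ cs.length (p' * h * q') := by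
    intro p' hp' q' hq'
    have hmem : cs.length ((p' * p) * g * (q * q'))
        ∈ {n : ℕ | ∃ p ∈ P, ∃ q ∈ P, cs.length (p * g * q) = n} :=
      ⟨p' * p, P.mul_mem hp' hp, q * q', P.mul_mem hq hq', rfl⟩
    have h2 := Nat.sInf_le hmem
    have h3 : p' * h * q' = (p' * p) * g * (q * q') := by rw [hh]; group
    rw [h3, show cs.length h = sInf {n : ℕ | ∃ p ∈ P, ∃ q ∈ P, cs.length (p * g * q) = n}
      from by rw [hh, hpq]]
    exact h2
  have h1 : h = 1 := core cs hmax hnormh hminh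
  have hg1 : g = p⁻¹ * q⁻¹ := by
    calc g = p⁻¹ * (p * g * q) * q⁻¹ := by group
      _ = p⁻¹ * q⁻¹ := by rw [← hh, h1]; group
  rw [hg1]
  exact P.mul_mem (P.inv_mem hp) (P.inv_mem hq)


end Main

end Stmt8Aux

theorem stmt8 {V : Type*} [Fintype V] (M : CoxeterMatrix V)
    (Δ : Set V) (hΔ : M.IsMaxClique Δ) :
    Subgroup.normalizer (M.sp Δ : Set M.Group) = M.sp Δ ∧
      Subgroup.centralizer (M.sp Δ : Set M.Group) =
        (Subgroup.center ↥(M.sp Δ)).map (M.sp Δ).subtype := by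
  classical
  set cs := M.toCoxeterSystem with hcs
  have hsp : M.sp Δ = Stmt8Aux.spS cs Δ := by
    unfold CoxeterMatrix.sp Stmt8Aux.spS
    rw [hcs, CoxeterMatrix.toCoxeterSystem_simple]
  have hmax := Stmt8Aux.maxClique_hmax (M := M) hΔ
  have hnorm : Subgroup.normalizer (M.sp Δ : Set M.Group) = M.sp Δ := by
    rw [hsp]
    exact Stmt8Aux.normalizer_spS cs hmax
  refine ⟨hnorm, ?_⟩
  have hcent_le_norm : Subgroup.centralizer (M.sp Δ : Set M.Group) ≤ Subgroup.normalizer (M.sp Δ : Set M.Group) := by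
    intro g hg
    rw [Subgroup.mem_centralizer_iff] at hg
    rw [Subgroup.mem_normalizer_iff]
    intro n
    constructor
    · intro hn
      have h1 := hg n hn
      rw [show g * n * g⁻¹ = n from by rw [← h1]; group]
      exact hn
    · intro hn
      have h1 := hg _ hn
      have h2 : n = g * n * g⁻¹ := by
        calc n = g⁻¹ * ((g * n * g⁻¹) * g) := by group
          _ = g⁻¹ * (g * (g * n * g⁻¹)) := by rw [h1]
          _ = g * n * g⁻¹ := by group
      rw [h2]
      exact hn
  have hcent_le : Subgroup.centralizer (M.sp Δ : Set M.Group) ≤ M.sp Δ := by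
    intro g hg
    exact hnorm ▸ hcent_le_norm hg
  ext x
  constructor
  · intro hx
    have hxP : x ∈ M.sp Δ := hcent_le hx
    rw [Subgroup.mem_map]
    refine ⟨⟨x, hxP⟩, ?_, rfl⟩
    rw [Subgroup.mem_center_iff]
    intro z
    apply Subtype.ext
    show (z : M.Group) * x = x * z
    exact (Subgroup.mem_centralizer_iff.mp hx) z z.2
  · intro hx
    rw [Subgroup.mem_map] at hx
    obtain ⟨y, hy, rfl⟩ := hx
    rw [Subgroup.mem_centralizer_iff]
    intro z hz
    have h3 := (Subgroup.mem_center_iff.mp hy) ⟨z, hz⟩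
    exact congrArg Subtype.val h3
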